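/- Let g be a standard Gaussian random variable. For any fixed s ∈ (0,1] and parameters 0 < β₁ < β₂, define ρ_β(s) = E[ tanh²(β g √(ξ'(s))) · cosh(β g √(ξ'(s))) ] · e^{-β² ξ'(s)/2}, where ξ(s) = s^p/2 for a fixed integer p ≥ 2. Then ρ_{β₁}(s) < ρ_{β₂}(s). -/

import Mathlib

open MeasureTheory ProbabilityTheory

/-- `ρ_β(s) = E[tanh²(βg√(ξ'(s))) cosh(βg√(ξ'(s)))] e^{-β²ξ'(s)/2}` for a standard
Gaussian `g`, where `ξ(s) = s^p/2`, so `ξ'(s) = p s^(p-1)/2`. -/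
noncomputable def rhoAux (p : ℕ) (s β : ℝ) : ℝ :=
  (∫ x, Real.tanh (β * x * Real.sqrt ((p:ℝ) * s ^ (p - 1) / 2)) ^ 2
      * Real.cosh (β * x * Real.sqrt ((p:ℝ) * s ^ (p - 1) / 2)) ∂(gaussianReal 0 1))
    * Real.exp (-β ^ 2 * ((p:ℝ) * s ^ (p - 1) / 2) / 2)

lemma gauss_integral_eq (f : ℝ → ℝ) :
    ∫ x, f x ∂(gaussianReal 0 1) = ∫ x, gaussianPDFReal 0 1 x * f x := by
  rw [gaussianReal_of_var_ne_zero 0 one_ne_zero]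
  have h : gaussianPDF 0 1 = fun x => ((Real.toNNReal (gaussianPDFReal 0 1 x)) : ENNReal) := rfl
  rw [h, integral_withDensity_eq_integral_smul
    (measurable_gaussianPDFReal 0 1).real_toNNReal]
  congr 1
  ext x
  rw [NNReal.smul_def, smul_eq_mul, Real.coe_toNNReal _ (gaussianPDFReal_nonneg 0 1 x)]

lemma gauss_integrable_iff (f : ℝ → ℝ) :
    Integrable f (gaussianReal 0 1) ↔
      Integrable (fun x => gaussianPDFReal 0 1 x * f x) volume := by
  rw [gaussianReal_of_var_ne_zero 0 one_ne_zero]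
  have h : gaussianPDF 0 1 = fun x => ((Real.toNNReal (gaussianPDFReal 0 1 x)) : ENNReal) := rfl
  rw [h, integrable_withDensity_iff_integrable_smul
    (measurable_gaussianPDFReal 0 1).real_toNNReal]
  constructor <;> intro hi <;>
    exact hi.congr (Filter.Eventually.of_forall fun x => by
      simp [NNReal.smul_def, Real.coe_toNNReal _ (gaussianPDFReal_nonneg 0 1 x)])

lemma pdf_mul_cosh (a x : ℝ) :
    gaussianPDFReal 0 1 x * Real.cosh (a * x)
      = Real.exp (a ^ 2 / 2) / 2 * (gaussianPDFReal a 1 x + gaussianPDFReal (-a) 1 x) := by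
  simp only [gaussianPDFReal, Real.cosh_eq, NNReal.coe_one, mul_one, sub_zero, sub_neg_eq_add]
  have h1 : Real.exp (a ^ 2 / 2) * Real.exp (-(x - a) ^ 2 / 2) =
      Real.exp (-x ^ 2 / 2) * Real.exp (a * x) := by
    rw [← Real.exp_add, ← Real.exp_add]; congr 1; ring
  have h2 : Real.exp (a ^ 2 / 2) * Real.exp (-(x + a) ^ 2 / 2) =
      Real.exp (-x ^ 2 / 2) * Real.exp (-(a * x)) := by
    rw [← Real.exp_add, ← Real.exp_add]; congr 1; ring
  linear_combination (-(Real.sqrt (2 * Real.pi))⁻¹ / 2) * (h1 + h2)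

lemma integrable_cosh_gauss (a : ℝ) :
    Integrable (fun x => Real.cosh (a * x)) (gaussianReal 0 1) := by
  rw [gauss_integrable_iff]
  have : (fun x => gaussianPDFReal 0 1 x * Real.cosh (a * x))
      = fun x => Real.exp (a ^ 2 / 2) / 2 * (gaussianPDFReal a 1 x + gaussianPDFReal (-a) 1 x) := by
    funext x; exact pdf_mul_cosh a x
  rw [this]
  exact ((integrable_gaussianPDFReal a 1).add (integrable_gaussianPDFReal (-a) 1)).const_mul _

lemma integral_cosh_gauss (a : ℝ) :
    ∫ x, Real.cosh (a * x) ∂(gaussianReal 0 1) = Real.exp (a ^ 2 / 2) := by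
  rw [gauss_integral_eq]
  have : (fun x => gaussianPDFReal 0 1 x * Real.cosh (a * x))
      = fun x => Real.exp (a ^ 2 / 2) / 2 * (gaussianPDFReal a 1 x + gaussianPDFReal (-a) 1 x) := by
    funext x; exact pdf_mul_cosh a x
  rw [this, integral_const_mul, integral_add (integrable_gaussianPDFReal a 1)
    (integrable_gaussianPDFReal (-a) 1), integral_gaussianPDFReal_eq_one a one_ne_zero,
    integral_gaussianPDFReal_eq_one (-a) one_ne_zero]
  ring

lemma integrable_sech_gauss (a : ℝ) :
    Integrable (fun x => (Real.cosh (a * x))⁻¹) (gaussianReal 0 1) := by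
  have hcont : Continuous fun x : ℝ => (Real.cosh (a * x))⁻¹ := by
    have h1 : Continuous fun x : ℝ => Real.cosh (a * x) :=
      Real.continuous_cosh.comp (continuous_const.mul continuous_id)
    exact h1.inv₀ fun x => (Real.cosh_pos (a * x)).ne'
  refine Integrable.mono' (integrable_const (1 : ℝ)) hcont.aestronglyMeasurable
    (Filter.Eventually.of_forall fun x => ?_)
  rw [Real.norm_eq_abs, abs_of_nonneg (inv_nonneg.2 (Real.cosh_pos _).le)]
  exact inv_le_one_of_one_le₀ (Real.one_le_cosh _)

lemma tanh_sq_mul_cosh (u : ℝ) :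
    Real.tanh u ^ 2 * Real.cosh u = Real.cosh u - (Real.cosh u)⁻¹ := by
  have hc : Real.cosh u ≠ 0 := (Real.cosh_pos u).ne'
  rw [Real.tanh_eq_sinh_div_cosh]
  field_simp
  nlinarith [Real.cosh_sq u]

-- strict monotonicity of t ↦ exp (t^2/2) * cosh (x*t) on [0, ∞)
lemma auxStrictMono (x : ℝ) :
    StrictMonoOn (fun t : ℝ => Real.exp (t ^ 2 / 2) * Real.cosh (x * t)) (Set.Ici 0) := by
  have hderiv : ∀ t : ℝ, HasDerivAt (fun t : ℝ => Real.exp (t ^ 2 / 2) * Real.cosh (x * t))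
      (Real.exp (t ^ 2 / 2) * t * Real.cosh (x * t)
        + Real.exp (t ^ 2 / 2) * (Real.sinh (x * t) * x)) t := by
    intro t
    have h1 : HasDerivAt (fun t : ℝ => Real.exp (t ^ 2 / 2)) (Real.exp (t ^ 2 / 2) * t) t := by
      have h0 : HasDerivAt (fun t : ℝ => t ^ 2 / 2) t t := by
        simpa using (hasDerivAt_pow 2 t).div_const 2
      simpa using h0.exp
    have h2 : HasDerivAt (fun t : ℝ => Real.cosh (x * t)) (Real.sinh (x * t) * x) t := by
      simpa using ((hasDerivAt_id t).const_mul x).cosh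
    exact h1.mul h2
  apply strictMonoOn_of_deriv_pos (convex_Ici 0)
  · exact (Real.continuous_exp.comp (by continuity)).mul
      (Real.continuous_cosh.comp (by continuity)) |>.continuousOn
  · intro t ht
    rw [interior_Ici] at ht
    rw [(hderiv t).deriv]
    have hxs : 0 ≤ Real.sinh (x * t) * x := by
      rcases le_or_gt 0 x with hx | hx
      · exact mul_nonneg (Real.sinh_nonneg_iff.2 (mul_nonneg hx ht.le)) hx
      · have h1 : Real.sinh (x * t) ≤ 0 := Real.sinh_nonpos_iff.2 (mul_nonpos_of_nonpos_of_nonneg hx.le ht.le)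
        nlinarith
    have h0 : 0 < Real.exp (t ^ 2 / 2) * t * Real.cosh (x * t) :=
      mul_pos (mul_pos (Real.exp_pos _) ht) (Real.cosh_pos _)
    nlinarith [Real.exp_pos (t ^ 2 / 2)]

lemma sech_pointwise_lt {t₁ t₂ : ℝ} (h1 : 0 < t₁) (h12 : t₁ < t₂) (x : ℝ) :
    Real.exp (-t₂ ^ 2 / 2) * (Real.cosh (t₂ * x))⁻¹
      < Real.exp (-t₁ ^ 2 / 2) * (Real.cosh (t₁ * x))⁻¹ := by
  have key : Real.exp (t₁ ^ 2 / 2) * Real.cosh (x * t₁)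
      < Real.exp (t₂ ^ 2 / 2) * Real.cosh (x * t₂) :=
    auxStrictMono x (le_of_lt h1) (le_of_lt (h1.trans h12)) h12
  have hp : 0 < Real.exp (t₁ ^ 2 / 2) * Real.cosh (x * t₁) :=
    mul_pos (Real.exp_pos _) (Real.cosh_pos _)
  have hinv := inv_strictAnti₀ hp key
  have e1 : ∀ t : ℝ, (Real.exp (t ^ 2 / 2) * Real.cosh (x * t))⁻¹
      = Real.exp (-t ^ 2 / 2) * (Real.cosh (t * x))⁻¹ := by
    intro t
    rw [mul_inv, ← Real.exp_neg, mul_comm x t, neg_div]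
  rwa [e1, e1] at hinv

lemma rhoAux_eq (p : ℕ) (s β : ℝ) (hs : 0 < (p:ℝ) * s ^ (p-1) / 2) :
    rhoAux p s β = 1 - Real.exp (-(β * Real.sqrt ((p:ℝ) * s ^ (p - 1) / 2)) ^ 2 / 2)
      * ∫ x, (Real.cosh ((β * Real.sqrt ((p:ℝ) * s ^ (p - 1) / 2)) * x))⁻¹ ∂(gaussianReal 0 1) := by
  set c := Real.sqrt ((p:ℝ) * s ^ (p - 1) / 2) with hcdef
  set t := β * c with htdef
  have hc2 : c ^ 2 = (p:ℝ) * s ^ (p - 1) / 2 := Real.sq_sqrt hs.le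
  have hexp : Real.exp (-β ^ 2 * ((p:ℝ) * s ^ (p - 1) / 2) / 2) = Real.exp (-t ^ 2 / 2) := by
    rw [htdef, mul_pow, hc2]; ring_nf
  have hfun : (fun x => Real.tanh (β * x * c) ^ 2 * Real.cosh (β * x * c))
      = fun x => Real.cosh (t * x) - (Real.cosh (t * x))⁻¹ := by
    funext x
    rw [show β * x * c = t * x by rw [htdef]; ring, tanh_sq_mul_cosh]
  rw [rhoAux, hexp, hfun, integral_sub (integrable_cosh_gauss t) (integrable_sech_gauss t),
    integral_cosh_gauss t, sub_mul, ← Real.exp_add]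
  ring_nf
  rw [Real.exp_zero]


/-- For fixed `s ∈ (0,1]` and `0 < β₁ < β₂`, `ρ_{β₁}(s) < ρ_{β₂}(s)`. -/
theorem stmt9 (p : ℕ) (hp : 2 ≤ p) (s : ℝ) (hs : s ∈ Set.Ioc (0:ℝ) 1)
    (β₁ β₂ : ℝ) (hβ₁ : 0 < β₁) (hβ : β₁ < β₂) :
    rhoAux p s β₁ < rhoAux p s β₂ := by
  obtain ⟨hs0, hs1⟩ := hs
  have hple : 0 < (p:ℝ) := by exact_mod_cast Nat.lt_of_lt_of_le Nat.zero_lt_two hp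
  have hξ : 0 < (p:ℝ) * s ^ (p - 1) / 2 := by positivity
  set c := Real.sqrt ((p:ℝ) * s ^ (p - 1) / 2) with hcdef
  have hc : 0 < c := Real.sqrt_pos.2 hξ
  rw [rhoAux_eq p s β₁ hξ, rhoAux_eq p s β₂ hξ, ← hcdef]
  set t₁ := β₁ * c with ht₁def
  set t₂ := β₂ * c with ht₂def
  have ht1 : 0 < t₁ := mul_pos hβ₁ hc
  have ht12 : t₁ < t₂ := mul_lt_mul_of_pos_right hβ hc
  have key : Real.exp (-t₂ ^ 2 / 2) * ∫ x, (Real.cosh (t₂ * x))⁻¹ ∂(gaussianReal 0 1)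
      < Real.exp (-t₁ ^ 2 / 2) * ∫ x, (Real.cosh (t₁ * x))⁻¹ ∂(gaussianReal 0 1) := by
    rw [← integral_const_mul, ← integral_const_mul]
    have hint1 : Integrable (fun x => Real.exp (-t₁ ^ 2 / 2) * (Real.cosh (t₁ * x))⁻¹)
        (gaussianReal 0 1) := (integrable_sech_gauss t₁).const_mul _
    have hint2 : Integrable (fun x => Real.exp (-t₂ ^ 2 / 2) * (Real.cosh (t₂ * x))⁻¹)
        (gaussianReal 0 1) := (integrable_sech_gauss t₂).const_mul _
    have hpos : 0 < ∫ x, (Real.exp (-t₁ ^ 2 / 2) * (Real.cosh (t₁ * x))⁻¹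
        - Real.exp (-t₂ ^ 2 / 2) * (Real.cosh (t₂ * x))⁻¹) ∂(gaussianReal 0 1) := by
      rw [integral_pos_iff_support_of_nonneg]
      · have hsupp : Function.support (fun x => Real.exp (-t₁ ^ 2 / 2) * (Real.cosh (t₁ * x))⁻¹
            - Real.exp (-t₂ ^ 2 / 2) * (Real.cosh (t₂ * x))⁻¹) = Set.univ :=
          Set.eq_univ_of_forall fun x => (sub_pos.2 (sech_pointwise_lt ht1 ht12 x)).ne'
        rw [hsupp]
        simp
      · exact fun x => (sub_pos.2 (sech_pointwise_lt ht1 ht12 x)).le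
      · exact hint1.sub hint2
    rw [integral_sub hint1 hint2] at hpos
    linarith
  linarith
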